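/- arXiv:1508.01863 — 3 statements merged into one kernel-verified Lean document; each statement's English description precedes it below -/
import Mathlib

section
/- The polynomial P(t) = 1 - t + 9t² - 45t³ + 108t⁴ - 324t⁵ + 972t⁶ - 3645t⁷ + 6561t⁸ - 6561t⁹ + 59049t¹⁰ has exactly zero roots t with 1/(3t) a root of unity; equivalently, no inverse root of P is of the form 3ζ with ζ a root of unity. -/
open Polynomial

/-- The polynomial
`P(t) = 1 - t + 9t² - 45t³ + 108t⁴ - 324t⁵ + 972t⁶ - 3645t⁷ + 6561t⁸ - 6561t⁹ + 59049t¹⁰`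
has no root `t` for which `1/(3t)` is a root of unity; equivalently, no inverse root of `P`
is of the form `3ζ` with `ζ` a root of unity. -/
theorem stmt3 (P : Polynomial ℤ)
    (hP : P = 1 - X + 9 * X ^ 2 - 45 * X ^ 3 + 108 * X ^ 4 - 324 * X ^ 5 + 972 * X ^ 6
      - 3645 * X ^ 7 + 6561 * X ^ 8 - 6561 * X ^ 9 + 59049 * X ^ 10) :
    ∀ t : ℂ, Polynomial.aeval t P = 0 → ¬ ∃ n : ℕ, 0 < n ∧ (1 / (3 * t)) ^ n = 1 := by
  rintro t hroot ⟨n, hn, hpow⟩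
  have ht : t ≠ 0 := by
    rintro rfl
    simp [zero_pow hn.ne'] at hpow
  have h3t : (3 : ℂ) * t ≠ 0 := mul_ne_zero (by norm_num) ht
  set u : ℂ := 1 / (3 * t) with hudef
  have hu : 3 * t * u = 1 := by
    rw [hudef]
    field_simp
  have hroot' : (1:ℂ) - t + 9*t^2 - 45*t^3 + 108*t^4 - 324*t^5 + 972*t^6 - 3645*t^7
      + 6561*t^8 - 6561*t^9 + 59049*t^10 = 0 := by
    rw [hP] at hroot
    simpa [map_ofNat] using hroot
  set Q : ℤ[X] := 3 - X + 3 * X ^ 2 - 5 * X ^ 3 + 4 * X ^ 4 - 4 * X ^ 5 + 4 * X ^ 6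
      - 5 * X ^ 7 + 3 * X ^ 8 - X ^ 9 + 3 * X ^ 10 with hQdef
  -- u is a root of Q
  have hQu : aeval u Q = 0 := by
    rw [hQdef]
    simp only [map_add, map_sub, map_mul, map_pow, map_one, aeval_X, map_ofNat]
    linear_combination (3 * u ^ 10) * hroot' + ((-3 : ℂ) + (1 : ℂ) * u + (-3 : ℂ) * u ^ 2 + (5 : ℂ) * u ^ 3 + (-4 : ℂ) * u ^ 4 + (4 : ℂ) * u ^ 5 + (-4 : ℂ) * u ^ 6 + (5 : ℂ) * u ^ 7 + (-3 : ℂ) * u ^ 8 + (1 : ℂ) * u ^ 9 + (-9 : ℂ) * t * u + (3 : ℂ) * t * u ^ 2 + (-9 : ℂ) * t * u ^ 3 + (15 : ℂ) * t * u ^ 4 + (-12 : ℂ) * t * u ^ 5 + (12 : ℂ) * t * u ^ 6 + (-12 : ℂ) * t * u ^ 7 + (15 : ℂ) * t * u ^ 8 + (-9 : ℂ) * t * u ^ 9 + (-27 : ℂ) * t ^ 2 * u ^ 2 + (9 : ℂ) * t ^ 2 * u ^ 3 + (-27 : ℂ) * t ^ 2 * u ^ 4 + (45 : ℂ) * t ^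 2 * u ^ 5 + (-36 : ℂ) * t ^ 2 * u ^ 6 + (36 : ℂ) * t ^ 2 * u ^ 7 + (-36 : ℂ) * t ^ 2 * u ^ 8 + (45 : ℂ) * t ^ 2 * u ^ 9 + (-81 : ℂ) * t ^ 3 * u ^ 3 + (27 : ℂ) * t ^ 3 * u ^ 4 + (-81 : ℂ) * t ^ 3 * u ^ 5 + (135 : ℂ) * t ^ 3 * u ^ 6 + (-108 : ℂ) * t ^ 3 * u ^ 7 + (108 : ℂ) * t ^ 3 * u ^ 8 + (-108 : ℂ) * t ^ 3 * u ^ 9 + (-243 : ℂ) * t ^ 4 * u ^ 4 + (81 : ℂ) * t ^ 4 * u ^ 5 + (-243 : ℂ) * t ^ 4 * u ^ 6 + (405 : ℂ) * t ^ 4 * u ^ 7 + (-324 : ℂ) * t ^ 4 * u ^ 8 + (324 : ℂ) * t ^ 4 * u ^ 9 + (-729 : ℂ) * t ^ 5 * u ^ 5 + (243 : ℂ) * t ^ 5 * u ^ 6 + (-729 : ℂ) * t ^ 5 * u ^ 7 + (1215 : ℂ) * t ^ 5 * u ^ 8 + (-972 : ℂ) * t ^ 5 * u ^ 9 + (-2187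 : ℂ) * t ^ 6 * u ^ 6 + (729 : ℂ) * t ^ 6 * u ^ 7 + (-2187 : ℂ) * t ^ 6 * u ^ 8 + (3645 : ℂ) * t ^ 6 * u ^ 9 + (-6561 : ℂ) * t ^ 7 * u ^ 7 + (2187 : ℂ) * t ^ 7 * u ^ 8 + (-6561 : ℂ) * t ^ 7 * u ^ 9 + (-19683 : ℂ) * t ^ 8 * u ^ 8 + (6561 : ℂ) * t ^ 8 * u ^ 9 + (-59049 : ℂ) * t ^ 9 * u ^ 9) * hu
  -- u is a primitive d-th root of unity
  have hfin : IsOfFinOrder u := isOfFinOrder_iff_pow_eq_one.mpr ⟨n, hn, hpow⟩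
  set d := orderOf u with hddef
  have hdpos : 0 < d := hfin.orderOf_pos
  have hprim : IsPrimitiveRoot u d := IsPrimitiveRoot.orderOf u
  -- cyclotomic d ℤ divides Q
  have hdvdQ : cyclotomic d ℚ ∣ Q.map (Int.castRingHom ℚ) := by
    rw [cyclotomic_eq_minpoly_rat hprim hdpos]
    apply minpoly.dvd
    rw [show Int.castRingHom ℚ = algebraMap ℤ ℚ from rfl, aeval_map_algebraMap]
    exact hQu
  have hdvdZ : cyclotomic d ℤ ∣ Q := by
    rw [← map_cyclotomic_int d ℚ] at hdvdQ
    exact (map_dvd_map _ Int.cast_injective (cyclotomic.monic d ℤ)).mp hdvdQ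
  -- evaluations of Q
  have hQ1 : Q.eval 1 = 4 := by norm_num [hQdef]
  have hQm1 : Q.eval (-1) = 36 := by norm_num [hQdef]
  have hQ3 : Q.eval 3 = 168372 := by norm_num [hQdef]
  have hQne : Q ≠ 0 := fun h0 => by simp [h0] at hQ1
  -- degree bound: φ(d) ≤ 10
  have hdegQ : Q.natDegree = 10 := by rw [hQdef]; compute_degree!
  have hphi : Nat.totient d ≤ 10 := by
    have h1 := Polynomial.natDegree_le_of_dvd hdvdZ hQne
    rwa [natDegree_cyclotomic, hdegQ] at h1
  -- small cases d = 1, d = 2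
  by_cases hd1 : d = 1
  · rw [hd1, cyclotomic_one] at hdvdZ
    have := eval_dvd (x := (1 : ℤ)) hdvdZ
    rw [hQ1] at this
    norm_num at this
  by_cases hd2 : d = 2
  · rw [hd2, cyclotomic_two] at hdvdZ
    have := eval_dvd (x := (-1 : ℤ)) hdvdZ
    rw [hQm1] at this
    norm_num at this
  have hphi2 : 2 ≤ Nat.totient d := by
    by_contra hcon
    push_neg at hcon
    have h1 : 0 < Nat.totient d := Nat.totient_pos.mpr hdpos
    have h2 : Nat.totient d = 1 := by omega
    rcases Nat.totient_eq_one_iff.mp h2 with h | h <;> omega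
  -- a = Φ_d(3)
  set a : ℤ := (cyclotomic d ℤ).eval 3 with hadef
  have hadvdQ3 : a ∣ 168372 := hQ3 ▸ eval_dvd (x := (3 : ℤ)) hdvdZ
  have hadvdpow : a ∣ 3 ^ d - 1 := by
    have h2 : cyclotomic d ℤ ∣ X ^ d - 1 := by
      rw [← prod_cyclotomic_eq_X_pow_sub_one hdpos]
      exact Finset.dvd_prod_of_mem _ (Nat.mem_divisors_self d hdpos.ne')
    have := eval_dvd (x := (3 : ℤ)) h2
    simpa using this
  -- lower bound: a > 4
  have halow : (4 : ℤ) < a := by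
    have hlt := sub_one_pow_totient_lt_cyclotomic_eval (n := d) (q := (3 : ℝ))
      (by omega) (by norm_num)
    have hcast : ((a : ℤ) : ℝ) = (cyclotomic d ℝ).eval 3 := by
      rw [hadef, ← map_cyclotomic_int d ℝ]
      have h := eval_intCast_map (Int.castRingHom ℝ) (cyclotomic d ℤ) 3
      rw [eq_intCast] at h
      push_cast at h
      exact h.symm
    have h4 : (4 : ℝ) ≤ ((3 : ℝ) - 1) ^ Nat.totient d := by
      calc (4 : ℝ) = 2 ^ 2 := by norm_num
      _ ≤ 2 ^ Nat.totient d := by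
          apply pow_le_pow_right₀ (by norm_num) hphi2
      _ = ((3 : ℝ) - 1) ^ Nat.totient d := by norm_num
    have : (4 : ℝ) < ((a : ℤ) : ℝ) := by rw [hcast]; linarith
    exact_mod_cast this
  by_cases h1559 : (1559 : ℤ) ∣ a
  · -- then 1559 ∣ 3^d - 1, forcing 19 ∣ d or 41 ∣ d, contradicting φ(d) ≤ 10
    have hdvd3d : (1559 : ℤ) ∣ 3 ^ d - 1 := h1559.trans hadvdpow
    have h30 : (3 : ZMod 1559) ≠ 0 := by decide
    have h31 : (3 : ZMod 1559) ≠ 1 := by decide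
    have h32 : (3 : ZMod 1559) ^ 2 ≠ 1 := by decide
    haveI : Fact (Nat.Prime 1559) := ⟨by norm_num⟩
    have hz : (3 : ZMod 1559) ^ d = 1 := by
      have h := (ZMod.intCast_zmod_eq_zero_iff_dvd (3 ^ d - 1) 1559).mpr hdvd3d
      push_cast at h
      linear_combination h
    set e := orderOf (3 : ZMod 1559) with hedef
    have hed : e ∣ d := orderOf_dvd_of_pow_eq_one hz
    have he1558 : e ∣ 1558 := by
      have h := ZMod.pow_card_sub_one_eq_one (p := 1559) (a := 3)
        h30
      have h2 := orderOf_dvd_of_pow_eq_one h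
      simpa using h2
    have hepos : 0 < e := Nat.pos_of_dvd_of_pos he1558 (by norm_num)
    have he1 : e ≠ 1 := by
      intro h
      have h2 := orderOf_eq_one_iff.mp h
      exact absurd h2 h31
    have he2 : e ≠ 2 := by
      intro h
      have h2 := pow_orderOf_eq_one (3 : ZMod 1559)
      rw [← hedef, h] at h2
      exact absurd h2 h32
    have hkey : 19 ∣ e ∨ 41 ∣ e := by
      by_contra hcon
      push_neg at hcon
      obtain ⟨h19, h41⟩ := hcon
      have hc19 : Nat.Coprime 19 e := (Nat.Prime.coprime_iff_not_dvd (by norm_num)).mpr h19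
      have hc41 : Nat.Coprime 41 e := (Nat.Prime.coprime_iff_not_dvd (by norm_num)).mpr h41
      have he' : e ∣ 2 := by
        have h1558 : (1558 : ℕ) = 2 * (19 * 41) := by norm_num
        rw [h1558] at he1558
        exact (Nat.Coprime.dvd_of_dvd_mul_right (hc19.mul hc41).symm he1558)
      have hle : e ≤ 2 := Nat.le_of_dvd (by norm_num) he'
      omega
    have hcontra : 18 ≤ Nat.totient d := by
      rcases hkey with h19 | h41
      · have h : (18 : ℕ) ∣ Nat.totient d := by
          have := Nat.totient_dvd_of_dvd (h19.trans hed)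
          simpa [Nat.totient_prime (by norm_num : Nat.Prime 19)] using this
        exact Nat.le_of_dvd (Nat.totient_pos.mpr hdpos) h
      · have h : (40 : ℕ) ∣ Nat.totient d := by
          have := Nat.totient_dvd_of_dvd (h41.trans hed)
          simpa [Nat.totient_prime (by norm_num : Nat.Prime 41)] using this
        exact le_trans (by norm_num) (Nat.le_of_dvd (Nat.totient_pos.mpr hdpos) h)
    omega
  · -- a coprime to 3 and 1559, so a ∣ 4, contradicting a > 4
    have h3a : ¬ (3 : ℤ) ∣ a := by
      intro h3
      have h1 : (3 : ℤ) ∣ 3 ^ d - 1 := h3.trans hadvdpow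
      have h2 : (3 : ℤ) ∣ 3 ^ d := dvd_pow_self 3 hdpos.ne'
      have h3' : (3 : ℤ) ∣ 3 ^ d - (3 ^ d - 1) := dvd_sub h2 h1
      norm_num at h3'
    have hcop3 : IsCoprime (3 : ℤ) a :=
      (Prime.coprime_iff_not_dvd Int.prime_three).mpr h3a
    have hcop1559 : IsCoprime (1559 : ℤ) a := by
      exact (Prime.coprime_iff_not_dvd (by norm_num : Prime (1559 : ℤ))).mpr h1559
    have hdvd4 : a ∣ 4 := by
      have h : a ∣ 4 * (27 * 1559) := by
        have he : (4 * (27 * 1559) : ℤ) = 168372 := by norm_num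
        rw [he]
        exact hadvdQ3
      have hc : IsCoprime a (27 * 1559) := by
        refine IsCoprime.mul_right ?_ hcop1559.symm
        have h27 : (27 : ℤ) = 3 ^ 3 := by norm_num
        rw [h27]
        exact (hcop3.symm).pow_right
      exact hc.dvd_of_dvd_mul_right h
    have := Int.le_of_dvd (by norm_num) hdvd4
    omega
end

section
/- The polynomial 1 - t + 9t² - 45t³ + 108t⁴ - 324t⁵ + 972t⁶ - 3645t⁷ + 6561t⁸ - 6561t⁹ + 59049t¹⁰ is irreducible over ℚ. -/
open Polynomial

set_option maxHeartbeats 1600000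

private instance fact7 : Fact (Nat.Prime 7) := ⟨by norm_num⟩

private lemma no_small_factor (g : Polynomial (ZMod 7)) (hg : Irreducible g)
    (hgF : g ∣ (X ^ 10 - X ^ 9 + 9 * X ^ 8 - 45 * X ^ 7 + 108 * X ^ 6 - 324 * X ^ 5 + 972 * X ^ 4 - 3645 * X ^ 3 + 6561 * X ^ 2 - 6561 * X + 59049 : Polynomial (ZMod 7)))
    (hd : g.natDegree ≤ 5) : False := by
  haveI : Fact (Irreducible g) := ⟨hg⟩
  have hg0 : g ≠ 0 := hg.ne_zero
  have hdpos : 0 < g.natDegree := by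
    by_contra hzero
    push_neg at hzero
    have h0 : g.natDegree = 0 := Nat.le_zero.mp hzero
    have hgC := eq_C_of_natDegree_eq_zero h0
    have hcne : g.coeff 0 ≠ 0 := fun hc => hg0 (by rw [hgC, hc, map_zero])
    exact hg.not_isUnit (hgC ▸ isUnit_C.mpr (isUnit_iff_ne_zero.mpr hcne))
  haveI : CharP (AdjoinRoot g) 7 :=
    charP_of_injective_algebraMap (algebraMap (ZMod 7) (AdjoinRoot g)).injective 7
  have hK7 : (7 : AdjoinRoot g) = 0 := by simpa using CharP.cast_eq_zero (AdjoinRoot g) 7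
  set b := AdjoinRoot.root g with hb
  have hF0 : (b ^ 10 - b ^ 9 + 9 * b ^ 8 - 45 * b ^ 7 + 108 * b ^ 6 - 324 * b ^ 5 + 972 * b ^ 4 - 3645 * b ^ 3 + 6561 * b ^ 2 - 6561 * b + 59049 : AdjoinRoot g) = 0 := by
    have h := AdjoinRoot.mk_eq_zero.mpr hgF
    simp only [map_sub, map_add, map_mul, map_pow, map_ofNat, map_one, AdjoinRoot.mk_X] at h
    exact h
  have h10 : b ^ 10 = 3 + 2 * b + 5 * b ^ 2 + 5 * b ^ 3 + b ^ 4 + 2 * b ^ 5 + 4 * b ^ 6 + 3 * b ^ 7 + 5 * b ^ 8 + b ^ 9 := by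
    linear_combination hF0 + ((-8436) + 937 * b + (-938) * b ^ 2 + 520 * b ^ 3 + (-139) * b ^ 4 + 46 * b ^ 5 + (-16) * b ^ 6 + 6 * b ^ 7 + (-2) * b ^ 8) * hK7
  have h14 : b ^ 14 = 6 + 4 * b + 4 * b ^ 3 + 2 * b ^ 4 + 6 * b ^ 5 + 3 * b ^ 6 + 3 * b ^ 7 + 2 * b ^ 8 + 5 * b ^ 9 := by
    have e : b ^ 14 = b ^ 7 * b ^ 7 := by ring
    rw [e]
    linear_combination (51 + 14 * b + 6 * b ^ 2 + b ^ 3 + b ^ 4) * h10 + (21 + 20 * b + 43 * b ^ 2 + 48 * b ^ 3 + 22 * b ^ 4 + 21 * b ^ 5 + 35 * b ^ 6 + 32 * b ^ 7 + 46 * b ^ 8 + 20 * b ^ 9) * hK7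
  have h28 : b ^ 28 = b ^ 2 + 5 * b ^ 3 + 4 * b ^ 5 + 3 * b ^ 6 + b ^ 7 + 5 * b ^ 8 + 5 * b ^ 9 := by
    have e : b ^ 28 = b ^ 14 * b ^ 14 := by ring
    rw [e, h14]
    linear_combination (167414 + 53640 * b + 17588 * b ^ 2 + 5516 * b ^ 3 + 1882 * b ^ 4 + 546 * b ^ 5 + 204 * b ^ 6 + 45 * b ^ 7 + 25 * b ^ 8) * h10 + (71754 + 70828 * b + 142447 * b ^ 2 + 165291 * b ^ 3 + 77184 * b ^ 4 + 72782 * b ^ 5 + 119045 * b ^ 6 + 110036 * b ^ 7 + 155038 * b ^ 8 + 73738 * b ^ 9) * hK7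
  have h42 : b ^ 42 = 5 * b + 6 * b ^ 2 + b ^ 3 + b ^ 4 + 5 * b ^ 5 + 5 * b ^ 6 + 6 * b ^ 7 + 6 * b ^ 8 + 2 * b ^ 9 := by
    have e : b ^ 42 = b ^ 28 * b ^ 14 := by ring
    rw [e, h28, h14]
    linear_combination (187089 + 60232 * b + 19574 * b ^ 2 + 6246 * b ^ 3 + 2066 * b ^ 4 + 637 * b ^ 5 + 215 * b ^ 6 + 60 * b ^ 7 + 25 * b ^ 8) * h10 + (80181 + 79267 * b + 159233 * b ^ 2 + 184932 * b ^ 3 + 86404 * b ^ 4 + 81368 * b ^ 5 + 133132 * b ^ 6 + 123106 * b ^ 7 + 173361 * b ^ 8 + 82605 * b ^ 9) * hK7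
  have h49 : b ^ 49 = 5 + 6 * b ^ 2 + 5 * b ^ 3 + 3 * b ^ 4 + 6 * b ^ 6 + 2 * b ^ 7 + 4 * b ^ 9 := by
    have e : b ^ 49 = b ^ 42 * b ^ 7 := by ring
    rw [e, h42]
    linear_combination (2216 + 716 * b + 232 * b ^ 2 + 75 * b ^ 3 + 24 * b ^ 4 + 8 * b ^ 5 + 2 * b ^ 6) * h10 + (949 + 940 * b + 1886 * b ^ 2 + 2192 * b ^ 3 + 1025 * b ^ 4 + 965 * b ^ 5 + 1577 * b ^ 6 + 1459 * b ^ 7 + 2055 * b ^ 8 + 980 * b ^ 9) * hK7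
  have h98 : b ^ 98 = 3 + 5 * b + 4 * b ^ 2 + 4 * b ^ 3 + 2 * b ^ 5 + 3 * b ^ 6 + 3 * b ^ 7 + 6 * b ^ 8 + 2 * b ^ 9 := by
    have e : b ^ 98 = b ^ 49 * b ^ 49 := by ring
    rw [e, h49]
    linear_combination (87096 + 27984 * b + 9140 * b ^ 2 + 2884 * b ^ 3 + 964 * b ^ 4 + 288 * b ^ 5 + 112 * b ^ 6 + 16 * b ^ 7 + 16 * b ^ 8) * h10 + (37330 + 36877 * b + 74132 * b ^ 2 + 86054 * b ^ 3 + 40206 * b ^ 4 + 37878 * b ^ 5 + 61966 * b ^ 6 + 57281 * b ^ 7 + 80697 * b ^ 8 + 38426 * b ^ 9) * hK7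
  have h196 : b ^ 196 = 2 + 5 * b + 2 * b ^ 3 + 4 * b ^ 4 + 5 * b ^ 5 + 5 * b ^ 7 + b ^ 8 + 5 * b ^ 9 := by
    have e : b ^ 196 = b ^ 98 * b ^ 98 := by ring
    rw [e, h98]
    linear_combination (85057 + 27455 * b + 8873 * b ^ 2 + 2859 * b ^ 3 + 929 * b ^ 4 + 296 * b ^ 5 + 96 * b ^ 6 + 28 * b ^ 7 + 4 * b ^ 8) * h10 + (36454 + 36072 * b + 72409 * b ^ 2 + 84135 * b ^ 3 + 39322 * b ^ 4 + 37002 * b ^ 5 + 60555 * b ^ 6 + 56008 * b ^ 7 + 78846 * b ^ 8 + 37612 * b ^ 9) * hK7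
  have h294 : b ^ 294 = 3 + 4 * b + 4 * b ^ 2 + 4 * b ^ 3 + 3 * b ^ 4 + 6 * b ^ 5 + 3 * b ^ 6 + 5 * b ^ 7 := by
    have e : b ^ 294 = b ^ 196 * b ^ 98 := by ring
    rw [e, h196, h98]
    linear_combination (114757 + 37159 * b + 11939 * b ^ 2 + 3897 * b ^ 3 + 1230 * b ^ 4 + 411 * b ^ 5 + 123 * b ^ 6 + 42 * b ^ 7 + 10 * b ^ 8) * h10 + (49182 + 48716 * b + 97707 * b ^ 2 + 113597 * b ^ 3 + 53110 * b ^ 4 + 49941 * b ^ 5 + 81739 * b ^ 6 + 75618 * b ^ 7 + 106415 * b ^ 8 + 50823 * b ^ 9) * hK7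
  have h343 : b ^ 343 = 1 + 3 * b + 2 * b ^ 3 + 4 * b ^ 4 + 5 * b ^ 5 + b ^ 6 + 2 * b ^ 8 + 5 * b ^ 9 := by
    have e : b ^ 343 = b ^ 294 * b ^ 49 := by ring
    rw [e, h294, h49]
    linear_combination (13951 + 4395 * b + 1486 * b ^ 2 + 434 * b ^ 3 + 166 * b ^ 4 + 32 * b ^ 5 + 20 * b ^ 6) * h10 + (5981 + 5872 * b + 11863 * b ^ 2 + 13723 * b ^ 3 + 6398 * b ^ 4 + 6058 * b ^ 5 + 9898 * b ^ 6 + 9141 * b ^ 7 + 12895 * b ^ 8 + 6098 * b ^ 9) * hK7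
  have h686 : b ^ 686 = 4 + b + 5 * b ^ 2 + 5 * b ^ 3 + 6 * b ^ 4 + 6 * b ^ 6 + 3 * b ^ 7 + 6 * b ^ 8 + b ^ 9 := by
    have e : b ^ 686 = b ^ 343 * b ^ 343 := by ring
    rw [e, h343]
    linear_combination (146868 + 47166 * b + 15390 * b ^ 2 + 4875 * b ^ 3 + 1643 * b ^ 4 + 484 * b ^ 5 + 174 * b ^ 6 + 45 * b ^ 7 + 25 * b ^ 8) * h10 + (62943 + 62177 * b + 124978 * b ^ 2 + 145082 * b ^ 3 + 67763 * b ^ 4 + 63857 * b ^ 5 + 104472 * b ^ 6 + 96580 * b ^ 7 + 136040 * b ^ 8 + 64764 * b ^ 9) * hK7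
  have h1372 : b ^ 1372 = 3 + b + 2 * b ^ 2 + 4 * b ^ 3 + b ^ 5 + 3 * b ^ 6 + 3 * b ^ 7 + 2 * b ^ 8 + 5 * b ^ 9 := by
    have e : b ^ 1372 = b ^ 686 * b ^ 686 := by ring
    rw [e, h686]
    linear_combination (53940 + 17233 * b + 5675 * b ^ 2 + 1762 * b ^ 3 + 600 * b ^ 4 + 176 * b ^ 5 + 60 * b ^ 6 + 13 * b ^ 7 + b ^ 8) * h10 + (23119 + 22798 * b + 45890 * b ^ 2 + 53221 * b ^ 3 + 24841 * b ^ 4 + 23441 * b ^ 5 + 38339 * b ^ 6 + 35428 * b ^ 7 + 49940 * b ^ 8 + 23718 * b ^ 9) * hK7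
  have h2058 : b ^ 2058 = 6 + 4 * b + b ^ 2 + 4 * b ^ 3 + 5 * b ^ 5 + 3 * b ^ 6 + 2 * b ^ 7 + 3 * b ^ 8 + 3 * b ^ 9 := by
    have e : b ^ 2058 = b ^ 1372 * b ^ 686 := by ring
    rw [e, h1372, h686]
    linear_combination (93504 + 30455 * b + 9678 * b ^ 2 + 3222 * b ^ 3 + 980 * b ^ 4 + 349 * b ^ 5 + 92 * b ^ 6 + 37 * b ^ 7 + 5 * b ^ 8) * h10 + (40074 + 39768 * b + 79641 * b ^ 2 + 92693 * b ^ 3 + 43370 * b ^ 4 + 40715 * b ^ 5 + 66664 * b ^ 6 + 61701 * b ^ 7 + 86768 * b ^ 8 + 41537 * b ^ 9) * hK7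
  have h2401 : b ^ 2401 = 6 + 4 * b + 3 * b ^ 2 + 5 * b ^ 3 + 6 * b ^ 4 + b ^ 5 + 3 * b ^ 6 + 2 * b ^ 7 + 4 * b ^ 8 + 3 * b ^ 9 := by
    have e : b ^ 2401 = b ^ 2058 * b ^ 343 := by ring
    rw [e, h2058, h343]
    linear_combination (110740 + 35624 * b + 11588 * b ^ 2 + 3690 * b ^ 3 + 1226 * b ^ 4 + 374 * b ^ 5 + 127 * b ^ 6 + 36 * b ^ 7 + 15 * b ^ 8) * h10 + (47460 + 46910 * b + 94246 * b ^ 2 + 109440 * b ^ 3 + 51128 * b ^ 4 + 48160 * b ^ 5 + 78794 * b ^ 6 + 72854 * b ^ 7 + 102600 * b ^ 8 + 48876 * b ^ 9) * hK7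
  have h4802 : b ^ 4802 = 2 + b + 3 * b ^ 2 + 3 * b ^ 3 + 2 * b ^ 4 + 2 * b ^ 5 + 6 * b ^ 6 + 3 * b ^ 7 + 6 * b ^ 8 + 3 * b ^ 9 := by
    have e : b ^ 4802 = b ^ 2401 * b ^ 2401 := by ring
    rw [e, h2401]
    linear_combination (95464 + 30830 * b + 9956 * b ^ 2 + 3215 * b ^ 3 + 1031 * b ^ 4 + 332 * b ^ 5 + 106 * b ^ 6 + 33 * b ^ 7 + 9 * b ^ 8) * h10 + (40918 + 40495 * b + 81271 * b ^ 2 + 94444 * b ^ 3 + 44148 * b ^ 4 + 41537 * b ^ 5 + 67969 * b ^ 6 + 62868 * b ^ 7 + 88500 * b ^ 8 + 42224 * b ^ 9) * hK7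
  have h9604 : b ^ 9604 = 5 + 5 * b + 4 * b ^ 2 + b ^ 4 + 5 * b ^ 5 + 4 * b ^ 6 + b ^ 7 + 2 * b ^ 8 + b ^ 9 := by
    have e : b ^ 9604 = b ^ 4802 * b ^ 4802 := by ring
    rw [e, h4802]
    linear_combination (133432 + 43089 * b + 13923 * b ^ 2 + 4494 * b ^ 3 + 1452 * b ^ 4 + 468 * b ^ 5 + 144 * b ^ 6 + 45 * b ^ 7 + 9 * b ^ 8) * h10 + (57185 + 56590 * b + 113588 * b ^ 2 + 131993 * b ^ 3 + 61694 * b ^ 4 + 58053 * b ^ 5 + 94996 * b ^ 6 + 87866 * b ^ 7 + 123688 * b ^ 8 + 59006 * b ^ 9) * hK7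
  have h14406 : b ^ 14406 = 3 + 4 * b + 5 * b ^ 4 + 6 * b ^ 5 + 6 * b ^ 6 + 6 * b ^ 7 + 3 * b ^ 8 + 6 * b ^ 9 := by
    have e : b ^ 14406 = b ^ 9604 * b ^ 4802 := by ring
    rw [e, h9604, h4802]
    linear_combination (47306 + 15275 * b + 4932 * b ^ 2 + 1592 * b ^ 3 + 515 * b ^ 4 + 162 * b ^ 5 + 48 * b ^ 6 + 15 * b ^ 7 + 3 * b ^ 8) * h10 + (20275 + 20064 * b + 40272 * b ^ 2 + 46797 * b ^ 3 + 21872 * b ^ 4 + 20580 * b ^ 5 + 33681 * b ^ 6 + 31153 * b ^ 7 + 43853 * b ^ 8 + 20920 * b ^ 9) * hK7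
  have h16807 : b ^ 16807 = 1 + 6 * b + 6 * b ^ 2 + 4 * b ^ 3 + b ^ 4 + 2 * b ^ 5 + 5 * b ^ 6 + 6 * b ^ 7 + 4 * b ^ 8 + 3 * b ^ 9 := by
    have e : b ^ 16807 = b ^ 14406 * b ^ 2401 := by ring
    rw [e, h14406, h2401]
    linear_combination (162133 + 52332 * b + 16919 * b ^ 2 + 5454 * b ^ 3 + 1767 * b ^ 4 + 558 * b ^ 5 + 183 * b ^ 6 + 51 * b ^ 7 + 18 * b ^ 8) * h10 + (69488 + 68756 * b + 138015 * b ^ 2 + 160364 * b ^ 3 + 74952 * b ^ 4 + 70536 * b ^ 5 + 115424 * b ^ 6 + 106754 * b ^ 7 + 150287 * b ^ 8 + 71689 * b ^ 9) * hK7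
  haveI : Module.Finite (ZMod 7) (AdjoinRoot g) :=
    Module.Finite.of_basis (AdjoinRoot.powerBasis hg0).basis
  haveI : Finite (AdjoinRoot g) := Module.finite_of_finite (ZMod 7)
  haveI : Fintype (AdjoinRoot g) := Fintype.ofFinite _
  have hcard : Fintype.card (AdjoinRoot g) = 7 ^ g.natDegree := by
    rw [Module.card_eq_pow_finrank (K := ZMod 7), ZMod.card, (AdjoinRoot.powerBasis hg0).finrank,
      AdjoinRoot.powerBasis_dim]
  have hbb : b ^ 7 ^ g.natDegree = b := by rw [← hcard] ; exact FiniteField.pow_card b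
  have h7X : (7 : Polynomial (ZMod 7)) = 0 := by
    rw [← map_ofNat (C : ZMod 7 →+* Polynomial (ZMod 7)) 7, show (7 : ZMod 7) = 0 by decide, map_zero]
  obtain ⟨n, hn⟩ : ∃ n, g.natDegree = n := ⟨_, rfl⟩
  rw [hn] at hbb
  have h1n : 1 ≤ n := hn ▸ hdpos
  have h5n : n ≤ 5 := hn ▸ hd
  interval_cases n
  · -- degree 1
    norm_num at hbb
    have hroot : (AdjoinRoot.mk g) ((X ^ 7) - X) = 0 := by
      simp only [map_sub, map_add, map_mul, map_pow, map_ofNat, map_one, AdjoinRoot.mk_X, ← hb]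
      linear_combination hbb
    have hdvd2 := AdjoinRoot.mk_eq_zero.mp hroot
    have hbez : (2 + 2 * X + 5 * X ^ 3 + 4 * X ^ 4 + 6 * X ^ 5 + 5 * X ^ 6) * (X ^ 10 - X ^ 9 + 9 * X ^ 8 - 45 * X ^ 7 + 108 * X ^ 6 - 324 * X ^ 5 + 972 * X ^ 4 - 3645 * X ^ 3 + 6561 * X ^ 2 - 6561 * X + 59049 : Polynomial (ZMod 7))
        + (4 + X ^ 3 + 6 * X ^ 4 + 2 * X ^ 6 + 6 * X ^ 7 + 6 * X ^ 8 + 2 * X ^ 9) * ((X ^ 7) - X) = 1 := by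
      linear_combination (16871 + 14996 * X + 43011 * X ^ 3 + 28292 * X ^ 4 + 51735 * X ^ 5 + 37638 * X ^ 6 + (-433) * X ^ 7 + 1875 * X ^ 8 + (-1877) * X ^ 9 + 446 * X ^ 10 + (-157) * X ^ 11 + 43 * X ^ 12 + (-24) * X ^ 13 + 7 * X ^ 14 + X ^ 15 + X ^ 16) * h7X
    exact hg.not_isUnit (isUnit_of_dvd_one (hbez ▸ dvd_add (hgF.mul_left _) (hdvd2.mul_left _)))
  · -- degree 2
    norm_num at hbb
    have hroot : (AdjoinRoot.mk g) ((5 + 6 * X ^ 2 + 5 * X ^ 3 + 3 * X ^ 4 + 6 * X ^ 6 + 2 * X ^ 7 + 4 * X ^ 9) - X) = 0 := by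
      simp only [map_sub, map_add, map_mul, map_pow, map_ofNat, map_one, AdjoinRoot.mk_X, ← hb]
      linear_combination hbb - h49
    have hdvd2 := AdjoinRoot.mk_eq_zero.mp hroot
    have hbez : (3 * X + 4 * X ^ 2 + 5 * X ^ 3 + X ^ 4 + 3 * X ^ 5 + X ^ 6 + X ^ 7 + 4 * X ^ 8) * (X ^ 10 - X ^ 9 + 9 * X ^ 8 - 45 * X ^ 7 + 108 * X ^ 6 - 324 * X ^ 5 + 972 * X ^ 4 - 3645 * X ^ 3 + 6561 * X ^ 2 - 6561 * X + 59049 : Polynomial (ZMod 7))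
        + (3 + X + 3 * X ^ 2 + 4 * X ^ 3 + 4 * X ^ 4 + 4 * X ^ 6 + 2 * X ^ 7 + 6 * X ^ 8 + 6 * X ^ 9) * ((5 + 6 * X ^ 2 + 5 * X ^ 3 + 3 * X ^ 4 + 6 * X ^ 6 + 2 * X ^ 7 + 4 * X ^ 9) - X) = 1 := by
      linear_combination (2 + 25307 * X + 30935 * X ^ 2 + 41246 * X ^ 3 + 5943 * X ^ 4 + 27395 * X ^ 5 + 4387 * X ^ 6 + 10352 * X ^ 7 + 32142 * X ^ 8 + (-2893) * X ^ 9 + 3229 * X ^ 10 + (-1931) * X ^ 11 + 519 * X ^ 12 + (-164) * X ^ 13 + 62 * X ^ 14 + (-15) * X ^ 15 + 8 * X ^ 16 + 3 * X ^ 17 + 4 * X ^ 18) * h7X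
    exact hg.not_isUnit (isUnit_of_dvd_one (hbez ▸ dvd_add (hgF.mul_left _) (hdvd2.mul_left _)))
  · -- degree 3
    norm_num at hbb
    have hroot : (AdjoinRoot.mk g) ((1 + 3 * X + 2 * X ^ 3 + 4 * X ^ 4 + 5 * X ^ 5 + X ^ 6 + 2 * X ^ 8 + 5 * X ^ 9) - X) = 0 := by
      simp only [map_sub, map_add, map_mul, map_pow, map_ofNat, map_one, AdjoinRoot.mk_X, ← hb]
      linear_combination hbb - h343
    have hdvd2 := AdjoinRoot.mk_eq_zero.mp hroot
    have hbez : (3 + 2 * X + X ^ 2 + X ^ 3 + 2 * X ^ 4 + 2 * X ^ 5 + 5 * X ^ 6 + 3 * X ^ 7 + 5 * X ^ 8) * (X ^ 10 - X ^ 9 + 9 * X ^ 8 - 45 * X ^ 7 + 108 * X ^ 6 - 324 * X ^ 5 + 972 * X ^ 4 - 3645 * X ^ 3 + 6561 * X ^ 2 - 6561 * X + 59049 : Polynomial (ZMod 7))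
        + (3 + 6 * X + 3 * X ^ 2 + 4 * X ^ 3 + X ^ 4 + 2 * X ^ 5 + X ^ 6 + 4 * X ^ 7 + 5 * X ^ 8 + 6 * X ^ 9) * ((1 + 3 * X + 2 * X ^ 3 + 4 * X ^ 4 + 5 * X ^ 5 + X ^ 6 + 2 * X ^ 8 + 5 * X ^ 9) - X) = 1 := by
      linear_combination (25307 + 14061 * X + 9375 * X ^ 2 + 7813 * X ^ 3 + 16251 * X ^ 4 + 15559 * X ^ 5 + 41758 * X ^ 6 + 21564 * X ^ 7 + 43256 * X ^ 8 + (-4273) * X ^ 9 + 3762 * X ^ 10 + (-2391) * X ^ 11 + 633 * X ^ 12 + (-206) * X ^ 13 + 71 * X ^ 14 + (-26) * X ^ 15 + 11 * X ^ 16 + 5 * X ^ 17 + 5 * X ^ 18) * h7X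
    exact hg.not_isUnit (isUnit_of_dvd_one (hbez ▸ dvd_add (hgF.mul_left _) (hdvd2.mul_left _)))
  · -- degree 4
    norm_num at hbb
    have hroot : (AdjoinRoot.mk g) ((6 + 4 * X + 3 * X ^ 2 + 5 * X ^ 3 + 6 * X ^ 4 + X ^ 5 + 3 * X ^ 6 + 2 * X ^ 7 + 4 * X ^ 8 + 3 * X ^ 9) - X) = 0 := by
      simp only [map_sub, map_add, map_mul, map_pow, map_ofNat, map_one, AdjoinRoot.mk_X, ← hb]
      linear_combination hbb - h2401
    have hdvd2 := AdjoinRoot.mk_eq_zero.mp hroot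
    have hbez : (3 + X + X ^ 2 + 4 * X ^ 4 + 4 * X ^ 5 + 5 * X ^ 6 + 2 * X ^ 7 + X ^ 8) * (X ^ 10 - X ^ 9 + 9 * X ^ 8 - 45 * X ^ 7 + 108 * X ^ 6 - 324 * X ^ 5 + 972 * X ^ 4 - 3645 * X ^ 3 + 6561 * X ^ 2 - 6561 * X + 59049 : Polynomial (ZMod 7))
        + (4 + 3 * X + X ^ 2 + 3 * X ^ 3 + 5 * X ^ 4 + 5 * X ^ 5 + X ^ 6 + X ^ 7 + 4 * X ^ 8 + 2 * X ^ 9) * ((6 + 4 * X + 3 * X ^ 2 + 5 * X ^ 3 + 6 * X ^ 4 + X ^ 5 + 3 * X ^ 6 + 2 * X ^ 7 + 4 * X ^ 8 + 3 * X ^ 9) - X) = 1 := by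
      linear_combination (25310 + 5628 * X + 10314 * X ^ 2 + (-1555) * X ^ 3 + 34587 * X ^ 4 + 29484 * X ^ 5 + 42327 * X ^ 6 + 13813 * X ^ 7 + 9749 * X ^ 8 + (-1287) * X ^ 9 + 478 * X ^ 10 + (-428) * X ^ 11 + 114 * X ^ 12 + (-35) * X ^ 13 + 14 * X ^ 14 + (-1) * X ^ 15 + 5 * X ^ 16 + 3 * X ^ 17 + X ^ 18) * h7X
    exact hg.not_isUnit (isUnit_of_dvd_one (hbez ▸ dvd_add (hgF.mul_left _) (hdvd2.mul_left _)))
  · -- degree 5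
    norm_num at hbb
    have hroot : (AdjoinRoot.mk g) ((1 + 6 * X + 6 * X ^ 2 + 4 * X ^ 3 + X ^ 4 + 2 * X ^ 5 + 5 * X ^ 6 + 6 * X ^ 7 + 4 * X ^ 8 + 3 * X ^ 9) - X) = 0 := by
      simp only [map_sub, map_add, map_mul, map_pow, map_ofNat, map_one, AdjoinRoot.mk_X, ← hb]
      linear_combination hbb - h16807
    have hdvd2 := AdjoinRoot.mk_eq_zero.mp hroot
    have hbez : (3 + 6 * X + 2 * X ^ 2 + 6 * X ^ 3 + 6 * X ^ 4 + 6 * X ^ 5 + 3 * X ^ 6 + X ^ 8) * (X ^ 10 - X ^ 9 + 9 * X ^ 8 - 45 * X ^ 7 + 108 * X ^ 6 - 324 * X ^ 5 + 972 * X ^ 4 - 3645 * X ^ 3 + 6561 * X ^ 2 - 6561 * X + 59049 : Polynomial (ZMod 7))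
        + (3 + 2 * X + 5 * X ^ 2 + 4 * X ^ 3 + 5 * X ^ 4 + 5 * X ^ 5 + 5 * X ^ 6 + 6 * X ^ 7 + 2 * X ^ 9) * ((1 + 6 * X + 6 * X ^ 2 + 4 * X ^ 3 + X ^ 4 + 2 * X ^ 5 + 5 * X ^ 6 + 6 * X ^ 7 + 4 * X ^ 8 + 3 * X ^ 9) - X) = 1 := by
      linear_combination (25307 + 47804 * X + 14064 * X ^ 2 + 52808 * X ^ 3 + 44166 * X ^ 4 + 50278 * X ^ 5 + 22243 * X ^ 6 + 519 * X ^ 7 + 8695 * X ^ 8 + (-1837) * X ^ 9 + 1150 * X ^ 10 + (-581) * X ^ 11 + 169 * X ^ 12 + (-44) * X ^ 13 + 30 * X ^ 14 + X ^ 15 + 6 * X ^ 16 + X ^ 17 + X ^ 18) * h7X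
    exact hg.not_isUnit (isUnit_of_dvd_one (hbez ▸ dvd_add (hgF.mul_left _) (hdvd2.mul_left _)))

private lemma irrF7 :
    Irreducible (X ^ 10 - X ^ 9 + 9 * X ^ 8 - 45 * X ^ 7 + 108 * X ^ 6 - 324 * X ^ 5 + 972 * X ^ 4 - 3645 * X ^ 3 + 6561 * X ^ 2 - 6561 * X + 59049 : Polynomial (ZMod 7)) := by
  set F : Polynomial (ZMod 7) := X ^ 10 - X ^ 9 + 9 * X ^ 8 - 45 * X ^ 7 + 108 * X ^ 6 - 324 * X ^ 5 + 972 * X ^ 4 - 3645 * X ^ 3 + 6561 * X ^ 2 - 6561 * X + 59049 with hF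
  have hdeg : F.natDegree = 10 := by rw [hF] ; compute_degree!
  have hF0 : F ≠ 0 := fun h => by simp [h] at hdeg
  have hFu : ¬ IsUnit F := not_isUnit_of_natDegree_pos _ (by omega)
  by_contra hirr
  rw [irreducible_iff] at hirr
  push_neg at hirr
  obtain ⟨a2, b2, hab, ha, hb2⟩ := hirr hFu
  have hab0 : a2 * b2 ≠ 0 := hab ▸ hF0
  have ha0 : a2 ≠ 0 := left_ne_zero_of_mul hab0
  have hb0 : b2 ≠ 0 := right_ne_zero_of_mul hab0
  have hdab : a2.natDegree + b2.natDegree = 10 := by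
    rw [← Polynomial.natDegree_mul ha0 hb0, ← hab, hdeg]
  rcases le_or_gt a2.natDegree 5 with h | h
  · obtain ⟨g, hgi, hgd⟩ := WfDvdMonoid.exists_irreducible_factor ha ha0
    exact no_small_factor g hgi (hgd.trans ⟨b2, hab⟩)
      ((Polynomial.natDegree_le_of_dvd hgd ha0).trans h)
  · obtain ⟨g, hgi, hgd⟩ := WfDvdMonoid.exists_irreducible_factor hb2 hb0
    exact no_small_factor g hgi (hgd.trans ⟨a2, by rw [← hF, hab] ; ring⟩)
      ((Polynomial.natDegree_le_of_dvd hgd hb0).trans (by omega))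

private lemma QZ_irr :
    Irreducible (X ^ 10 - X ^ 9 + 9 * X ^ 8 - 45 * X ^ 7 + 108 * X ^ 6 - 324 * X ^ 5 + 972 * X ^ 4 - 3645 * X ^ 3 + 6561 * X ^ 2 - 6561 * X + 59049 : Polynomial ℤ) := by
  have hmon : ((X ^ 10 - X ^ 9 + 9 * X ^ 8 - 45 * X ^ 7 + 108 * X ^ 6 - 324 * X ^ 5 + 972 * X ^ 4 - 3645 * X ^ 3 + 6561 * X ^ 2 - 6561 * X + 59049 : Polynomial ℤ)).Monic := by monicity!
  refine hmon.irreducible_of_irreducible_map (Int.castRingHom (ZMod 7)) _ ?_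
  have hmap : Polynomial.map (Int.castRingHom (ZMod 7))
      (X ^ 10 - X ^ 9 + 9 * X ^ 8 - 45 * X ^ 7 + 108 * X ^ 6 - 324 * X ^ 5 + 972 * X ^ 4 - 3645 * X ^ 3 + 6561 * X ^ 2 - 6561 * X + 59049 : Polynomial ℤ) = (X ^ 10 - X ^ 9 + 9 * X ^ 8 - 45 * X ^ 7 + 108 * X ^ 6 - 324 * X ^ 5 + 972 * X ^ 4 - 3645 * X ^ 3 + 6561 * X ^ 2 - 6561 * X + 59049 : Polynomial (ZMod 7)) := by
    simp [Polynomial.map_sub, Polynomial.map_add, Polynomial.map_mul, Polynomial.map_pow,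
      Polynomial.map_ofNat, Polynomial.map_one, Polynomial.map_X]
  rw [hmap]
  exact irrF7

private lemma QQ_irr :
    Irreducible (X ^ 10 - X ^ 9 + 9 * X ^ 8 - 45 * X ^ 7 + 108 * X ^ 6 - 324 * X ^ 5 + 972 * X ^ 4 - 3645 * X ^ 3 + 6561 * X ^ 2 - 6561 * X + 59049 : Polynomial ℚ) := by
  have hmon : ((X ^ 10 - X ^ 9 + 9 * X ^ 8 - 45 * X ^ 7 + 108 * X ^ 6 - 324 * X ^ 5 + 972 * X ^ 4 - 3645 * X ^ 3 + 6561 * X ^ 2 - 6561 * X + 59049 : Polynomial ℤ)).Monic := by monicity!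
  have h := (hmon.irreducible_iff_irreducible_map_fraction_map (K := ℚ)).mp QZ_irr
  have hmap : Polynomial.map (algebraMap ℤ ℚ)
      (X ^ 10 - X ^ 9 + 9 * X ^ 8 - 45 * X ^ 7 + 108 * X ^ 6 - 324 * X ^ 5 + 972 * X ^ 4 - 3645 * X ^ 3 + 6561 * X ^ 2 - 6561 * X + 59049 : Polynomial ℤ) = (X ^ 10 - X ^ 9 + 9 * X ^ 8 - 45 * X ^ 7 + 108 * X ^ 6 - 324 * X ^ 5 + 972 * X ^ 4 - 3645 * X ^ 3 + 6561 * X ^ 2 - 6561 * X + 59049 : Polynomial ℚ) := by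
    simp [Polynomial.map_sub, Polynomial.map_add, Polynomial.map_mul, Polynomial.map_pow,
      Polynomial.map_ofNat, Polynomial.map_one, Polynomial.map_X]
  rwa [hmap] at h

private noncomputable def scaleEquiv : Polynomial ℚ ≃ₐ[ℚ] Polynomial ℚ :=
  AlgEquiv.ofAlgHom (aeval (C (9 : ℚ) * X)) (aeval (C (9 : ℚ)⁻¹ * X))
    (by
      apply Polynomial.algHom_ext
      simp only [AlgHom.coe_comp, Function.comp_apply, aeval_X, map_mul, aeval_C,
        Polynomial.algebraMap_eq, AlgHom.coe_id, id_eq]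
      rw [← mul_assoc, ← C_mul]
      norm_num)
    (by
      apply Polynomial.algHom_ext
      simp only [AlgHom.coe_comp, Function.comp_apply, aeval_X, map_mul, aeval_C,
        Polynomial.algebraMap_eq, AlgHom.coe_id, id_eq]
      rw [← mul_assoc, ← C_mul]
      norm_num)

private lemma scaleEquiv_apply (p : Polynomial ℚ) :
    scaleEquiv p = aeval (C (9 : ℚ) * X) p := rfl

/-- The polynomial
`1 - t + 9t² - 45t³ + 108t⁴ - 324t⁵ + 972t⁶ - 3645t⁷ + 6561t⁸ - 6561t⁹ + 59049t¹⁰`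
is irreducible over `ℚ`. -/
theorem stmt4 :
    Irreducible (1 - X + 9 * X ^ 2 - 45 * X ^ 3 + 108 * X ^ 4 - 324 * X ^ 5 + 972 * X ^ 6
      - 3645 * X ^ 7 + 6561 * X ^ 8 - 6561 * X ^ 9 + 59049 * X ^ 10 : Polynomial ℚ) := by
  have hkey : (C (59049 : ℚ)) * (1 - X + 9 * X ^ 2 - 45 * X ^ 3 + 108 * X ^ 4 - 324 * X ^ 5
      + 972 * X ^ 6 - 3645 * X ^ 7 + 6561 * X ^ 8 - 6561 * X ^ 9 + 59049 * X ^ 10)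
      = scaleEquiv (X ^ 10 - X ^ 9 + 9 * X ^ 8 - 45 * X ^ 7 + 108 * X ^ 6 - 324 * X ^ 5 + 972 * X ^ 4 - 3645 * X ^ 3 + 6561 * X ^ 2 - 6561 * X + 59049 : Polynomial ℚ) := by
    rw [scaleEquiv_apply]
    simp only [map_sub, map_add, map_mul, map_pow, map_ofNat, map_one, aeval_X]
    ring
  have h1 : Irreducible (scaleEquiv (X ^ 10 - X ^ 9 + 9 * X ^ 8 - 45 * X ^ 7 + 108 * X ^ 6 - 324 * X ^ 5 + 972 * X ^ 4 - 3645 * X ^ 3 + 6561 * X ^ 2 - 6561 * X + 59049 : Polynomial ℚ)) :=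
    (MulEquiv.irreducible_iff (scaleEquiv : Polynomial ℚ ≃ₐ[ℚ] Polynomial ℚ)).mpr QQ_irr
  rw [← hkey] at h1
  exact (irreducible_isUnit_mul (isUnit_C.mpr (by norm_num))).mp h1
end

section
/- Let P₂(t) = (1-3t)²·Q(t) where Q(t) = 1 - t + 9t² - 45t³ + 108t⁴ - 324t⁵ + 972t⁶ - 3645t⁷ + 6561t⁸ - 6561t⁹ + 59049t¹⁰. Then the number of inverse roots α of P₂ (with multiplicity) such that α/3 is a root of unity is exactly 2. -/
open Polynomial
open scoped Classical


noncomputable def pz : Polynomial ℤ := C 3 * X^5 - X^4 - C 12 * X^3 - X^2 + C 10 * X + C 4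

lemma pz_natDegree : pz.natDegree = 5 := by
  unfold pz; compute_degree!

lemma pz_ne_zero : pz ≠ 0 := by
  intro h
  have := congrArg (Polynomial.eval (0:ℤ)) h
  simp [pz] at this

lemma pz_lead : pz.leadingCoeff = 3 := by
  rw [Polynomial.leadingCoeff, pz_natDegree]
  unfold pz
  simp [coeff_X_pow, Polynomial.coeff_X, Polynomial.coeff_one]

lemma pz_eval (k : ℤ) : pz.eval k = 3*k^5 - k^4 - 12*k^3 - k^2 + 10*k + 4 := by
  simp [pz]

lemma dvd_le' {x y : ℤ} (hy : (0:ℤ) < y) (h : x ∣ y) : -y ≤ x ∧ x ≤ y ∧ x ≠ 0 := by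
  have h1 := Int.le_of_dvd hy h
  have h2 := Int.le_of_dvd hy ((neg_dvd).mpr h)
  refine ⟨by omega, h1, ?_⟩
  rintro rfl
  exact absurd (zero_dvd_iff.mp h) (by omega)

lemma sieve1 (b : ℤ) (h0 : b ∣ 4) (h1 : b + 1 ∣ 3) (h2 : b - 1 ∣ 1)
    (h3 : b + 2 ∣ 4) (h4 : b - 2 ∣ 36) (h5 : b + 3 ∣ 349) (h6 : b - 3 ∣ 521) : False := by
  obtain ⟨l0, u0, n0⟩ := dvd_le' (by norm_num) h0
  obtain ⟨l2, u2, n2⟩ := dvd_le' (by norm_num) h2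
  interval_cases b <;> first | omega | (norm_num at h0; done) | (norm_num at h1; done) | (norm_num at h2; done) | (norm_num at h3; done) | (norm_num at h4; done) | (norm_num at h5; done) | (norm_num at h6; done)

lemma sieve2 (a b : ℤ) (h0 : b ∣ 4) (h1 : b + a + 1 ∣ 3) (h2 : b - a + 1 ∣ 1)
    (h3 : b + 2*a + 4 ∣ 4) (h4 : b - 2*a + 4 ∣ 36) (h5 : b + 3*a + 9 ∣ 349)
    (h6 : b - 3*a + 9 ∣ 521) : False := by
  obtain ⟨l0, u0, n0⟩ := dvd_le' (by norm_num) h0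
  obtain ⟨l1, u1, n1⟩ := dvd_le' (by norm_num) h1
  have ha1 : -8 ≤ a := by omega
  have ha2 : a ≤ 6 := by omega
  interval_cases a <;> interval_cases b <;>
    first | omega | (norm_num at h0; done) | (norm_num at h1; done) | (norm_num at h2; done) | (norm_num at h3; done) | (norm_num at h4; done) | (norm_num at h5; done) | (norm_num at h6; done)

lemma sieve3 (e f : ℤ) (h0 : f ∣ 4) (h1 : f + e + 3 ∣ 3) (h2 : f - e + 3 ∣ 1)
    (h3 : f + 2*e + 12 ∣ 4) (h4 : f - 2*e + 12 ∣ 36) (h5 : f + 3*e + 27 ∣ 349)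
    (h6 : f - 3*e + 27 ∣ 521) : False := by
  obtain ⟨l0, u0, n0⟩ := dvd_le' (by norm_num) h0
  obtain ⟨l1, u1, n1⟩ := dvd_le' (by norm_num) h1
  have ha1 : -10 ≤ e := by omega
  have ha2 : e ≤ 4 := by omega
  interval_cases e <;> interval_cases f <;>
    first | omega | (norm_num at h0; done) | (norm_num at h1; done) | (norm_num at h2; done) | (norm_num at h3; done) | (norm_num at h4; done) | (norm_num at h5; done) | (norm_num at h6; done)

lemma sieve4 (f : ℤ) (h0 : f ∣ 4) (h1 : f + 3 ∣ 3) (h2 : f - 3 ∣ 1) : False := by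
  obtain ⟨l0, u0, n0⟩ := dvd_le' (by norm_num) h0
  interval_cases f <;> first | omega | (norm_num at h0; done) | (norm_num at h1; done) | (norm_num at h2; done)

lemma factor_sieve (M T : Polynomial ℤ) (hM : M.Monic) (hd : 1 ≤ M.natDegree)
    (hMT : M * T = pz) : False := by
  have hT0 : T ≠ 0 := by
    rintro rfl
    rw [mul_zero] at hMT
    exact pz_ne_zero hMT.symm
  have hdeg : M.natDegree + T.natDegree = 5 := by
    rw [← Polynomial.natDegree_mul hM.ne_zero hT0, hMT, pz_natDegree]
  have hTl : T.coeff T.natDegree = 3 := by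
    have := congrArg Polynomial.leadingCoeff hMT
    rwa [Polynomial.leadingCoeff_mul, hM.leadingCoeff, one_mul, pz_lead] at this
  have dM : ∀ k : ℤ, M.eval k ∣ pz.eval k := fun k =>
    ⟨T.eval k, by rw [← hMT, Polynomial.eval_mul]⟩
  have dT : ∀ k : ℤ, T.eval k ∣ pz.eval k := fun k =>
    ⟨M.eval k, by rw [← hMT, Polynomial.eval_mul]; ring⟩
  have hd5 : M.natDegree ≤ 5 := by omega
  -- case on degree of M
  have hcase : M.natDegree = 1 ∨ M.natDegree = 2 ∨ M.natDegree = 3 ∨ M.natDegree = 4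
      ∨ M.natDegree = 5 := by omega
  have evpoly : ∀ (p : Polynomial ℤ) (d : ℕ), p.natDegree = d → ∀ k : ℤ,
      p.eval k = ∑ i ∈ Finset.range (d+1), p.coeff i * k ^ i := by
    intro p d hdp k
    rw [Polynomial.eval_eq_sum_range, hdp]
  rcases hcase with h | h | h | h | h
  · -- M linear
    have ev := evpoly M 1 h
    have hc1 : M.coeff 1 = 1 := by have := hM.coeff_natDegree; rwa [h] at this
    simp only [Finset.sum_range_succ, Finset.sum_range_zero, hc1] at ev
    apply sieve1 (M.coeff 0)
    · have := dM 0; rw [pz_eval, ev 0] at this; norm_num at this; convert this using 1 <;> ring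
    · have := dM 1; rw [pz_eval, ev 1] at this; norm_num at this; convert this using 1 <;> ring
    · have := dM (-1); rw [pz_eval, ev (-1)] at this; norm_num at this
      convert this using 1 <;> ring
    · have := dM 2; rw [pz_eval, ev 2] at this; norm_num at this; convert this using 1 <;> ring
    · have := dM (-2); rw [pz_eval, ev (-2)] at this; norm_num at this
      convert this using 1 <;> first | rfl | ring
    · have := dM 3; rw [pz_eval, ev 3] at this; norm_num at this; convert this using 1 <;> ring
    · have := dM (-3); rw [pz_eval, ev (-3)] at this; norm_num at this
      convert this using 1 <;> first | rfl | ring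
  · -- M quadratic
    have ev := evpoly M 2 h
    have hc2 : M.coeff 2 = 1 := by have := hM.coeff_natDegree; rwa [h] at this
    simp only [Finset.sum_range_succ, Finset.sum_range_zero, hc2] at ev
    apply sieve2 (M.coeff 1) (M.coeff 0)
    · have := dM 0; rw [pz_eval, ev 0] at this; norm_num at this; convert this using 1 <;> ring
    · have := dM 1; rw [pz_eval, ev 1] at this; norm_num at this; convert this using 1 <;> ring
    · have := dM (-1); rw [pz_eval, ev (-1)] at this; norm_num at this
      convert this using 1 <;> ring
    · have := dM 2; rw [pz_eval, ev 2] at this; norm_num at this; convert this using 1 <;> ring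
    · have := dM (-2); rw [pz_eval, ev (-2)] at this; norm_num at this
      convert this using 1 <;> first | rfl | ring
    · have := dM 3; rw [pz_eval, ev 3] at this; norm_num at this; convert this using 1 <;> ring
    · have := dM (-3); rw [pz_eval, ev (-3)] at this; norm_num at this
      convert this using 1 <;> first | rfl | ring
  · -- T quadratic with leading coeff 3
    have hTd : T.natDegree = 2 := by omega
    have ev := evpoly T 2 hTd
    have hc2 : T.coeff 2 = 3 := by rwa [hTd] at hTl
    simp only [Finset.sum_range_succ, Finset.sum_range_zero, hc2] at ev
    apply sieve3 (T.coeff 1) (T.coeff 0)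
    · have := dT 0; rw [pz_eval, ev 0] at this; norm_num at this; convert this using 1 <;> ring
    · have := dT 1; rw [pz_eval, ev 1] at this; norm_num at this; convert this using 1 <;> ring
    · have := dT (-1); rw [pz_eval, ev (-1)] at this; norm_num at this
      convert this using 1 <;> ring
    · have := dT 2; rw [pz_eval, ev 2] at this; norm_num at this; convert this using 1 <;> ring
    · have := dT (-2); rw [pz_eval, ev (-2)] at this; norm_num at this
      convert this using 1 <;> first | rfl | ring
    · have := dT 3; rw [pz_eval, ev 3] at this; norm_num at this; convert this using 1 <;> ring
    · have := dT (-3); rw [pz_eval, ev (-3)] at this; norm_num at this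
      convert this using 1 <;> first | rfl | ring
  · -- T linear with leading coeff 3
    have hTd : T.natDegree = 1 := by omega
    have ev := evpoly T 1 hTd
    have hc1 : T.coeff 1 = 3 := by rwa [hTd] at hTl
    simp only [Finset.sum_range_succ, Finset.sum_range_zero, hc1] at ev
    apply sieve4 (T.coeff 0)
    · have := dT 0; rw [pz_eval, ev 0] at this; norm_num at this; convert this using 1 <;> ring
    · have := dT 1; rw [pz_eval, ev 1] at this; norm_num at this; convert this using 1 <;> ring
    · have := dT (-1); rw [pz_eval, ev (-1)] at this; norm_num at this
      convert this using 1 <;> ring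
  · -- T constant = 3
    have hTd : T.natDegree = 0 := by omega
    have hc0 : T.coeff 0 = 3 := by rwa [hTd] at hTl
    have := dT 0
    rw [pz_eval] at this
    rw [Polynomial.eval_eq_sum_range, hTd] at this
    simp only [Finset.sum_range_succ, Finset.sum_range_zero, hc0] at this
    norm_num at this

lemma key (z : ℂ) (n : ℕ) (hn : 0 < n) (hzn : z ^ n = 1)
    (hS : 3 - z + 3*z^2 - 5*z^3 + 4*z^4 - 4*z^5 + 4*z^6 - 5*z^7 + 3*z^8 - z^9 + 3*z^10 = 0) :
    False := by
  have hz0 : z ≠ 0 := by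
    rintro rfl
    rw [zero_pow hn.ne'] at hzn
    exact zero_ne_one hzn
  have hw : z * z ^ (n - 1) = 1 := by
    rw [← pow_succ', Nat.sub_add_cancel hn]
    exact hzn
  set w := z ^ (n - 1) with hwdef
  have h5 : z^5 * (3*(z+w)^5 - (z+w)^4 - 12*(z+w)^3 - (z+w)^2 + 10*(z+w) + 4) = 0 := by
    linear_combination hS + (3 - z + 3*z*w + 3*z^2 - z^2*w + 3*z^2*w^2 - 5*z^3 + 3*z^3*w
      - z^3*w^2 + 3*z^3*w^3 + 4*z^4 - 5*z^4*w + 3*z^4*w^2 - z^4*w^3 + 3*z^4*w^4 - 8*z^5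
      - 6*z^5*w - 4*z^5*w^2 + 15*z^5*w^3 - 6*z^6 - 6*z^6*w + 30*z^6*w^2 - 4*z^7 + 30*z^7*w
      + 15*z^8) * hw
  have hc : 3*(z+w)^5 - (z+w)^4 - 12*(z+w)^3 - (z+w)^2 + 10*(z+w) + 4 = 0 := by
    rcases mul_eq_zero.mp h5 with h | h
    · exact absurd h (pow_ne_zero 5 hz0)
    · exact h
  have hzint : IsIntegral ℤ z := ⟨X^n - C 1, monic_X_pow_sub_C 1 hn.ne', by simp [hzn]⟩
  have hcint : IsIntegral ℤ (z + w) := hzint.add (hzint.pow _)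
  have hdvd : minpoly ℤ (z + w) ∣ pz := minpoly.isIntegrallyClosed_dvd hcint (by
    simp only [pz, map_add, map_sub, map_mul, map_pow, aeval_X, aeval_C, map_ofNat]
    push_cast
    linear_combination hc)
  obtain ⟨T, hT⟩ := hdvd
  exact factor_sieve _ T (minpoly.monic hcint) (minpoly.natDegree_pos hcint) hT.symm


/-- Let `P₂(t) = (1-3t)²·Q(t)` with
`Q(t) = 1 - t + 9t² - 45t³ + 108t⁴ - 324t⁵ + 972t⁶ - 3645t⁷ + 6561t⁸ - 6561t⁹ + 59049t¹⁰`.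
The number of inverse roots `α` of `P₂` (counted with multiplicity, i.e. roots `r = 1/α`)
such that `α/3` is a root of unity is exactly `2`. -/
theorem stmt18 (Q P₂ : Polynomial ℂ)
    (hQ : Q = 1 - X + 9 * X ^ 2 - 45 * X ^ 3 + 108 * X ^ 4 - 324 * X ^ 5 + 972 * X ^ 6
      - 3645 * X ^ 7 + 6561 * X ^ 8 - 6561 * X ^ 9 + 59049 * X ^ 10)
    (hP₂ : P₂ = (1 - 3 * X) ^ 2 * Q) :
    Multiset.card
      (P₂.roots.filter (fun r => ∃ n : ℕ, 0 < n ∧ (1 / (3 * r)) ^ n = 1)) = 2 := by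
  have hQ0 : Q.eval 0 = 1 := by rw [hQ]; simp
  have hQne : Q ≠ 0 := by
    intro h; rw [h] at hQ0; simp at hQ0
  have hLne : (1 - 3 * X : Polynomial ℂ) ≠ 0 := by
    intro h
    have := congrArg (Polynomial.eval 0) h
    simp at this
  have hLfac : (1 - 3 * X : Polynomial ℂ) = C (-3) * (X - C 3⁻¹) := by
    apply Polynomial.funext
    intro x
    simp only [eval_sub, eval_add, eval_mul, eval_one, eval_X, eval_C, eval_ofNat]
    field_simp
    ring
  have hroots : (1 - 3 * X : Polynomial ℂ).roots = {(3⁻¹ : ℂ)} := by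
    rw [hLfac, Polynomial.roots_C_mul _ (by norm_num : (-3 : ℂ) ≠ 0),
      Polynomial.roots_X_sub_C]
  have hne2 : ((1 - 3 * X : Polynomial ℂ) ^ 2) * Q ≠ 0 :=
    mul_ne_zero (pow_ne_zero 2 hLne) hQne
  rw [hP₂, Polynomial.roots_mul hne2, Polynomial.roots_pow, hroots,
    Multiset.filter_add, Multiset.card_add]
  have hQpart : Multiset.filter (fun r => ∃ n : ℕ, 0 < n ∧ (1 / (3 * r)) ^ n = 1) Q.roots
      = 0 := by
    rw [Multiset.filter_eq_nil]
    rintro r hr ⟨n, hn, h1⟩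
    have hroot : Q.eval r = 0 := (Polynomial.mem_roots'.mp hr).2
    rw [hQ] at hroot
    simp only [eval_sub, eval_add, eval_mul, eval_pow, eval_one, eval_X, eval_ofNat] at hroot
    have hz0 : (3 * r : ℂ) ≠ 0 := by
      intro h
      rw [h] at h1
      simp [zero_pow hn.ne'] at h1
    have hzn : (3 * r : ℂ) ^ n = 1 := by
      rw [one_div, inv_pow, inv_eq_one] at h1
      exact h1
    exact key (3 * r) n hn hzn (by linear_combination 3 * hroot)
  rw [hQpart]
  have h2 : (2 • ({(3⁻¹ : ℂ)} : Multiset ℂ)) = {(3⁻¹ : ℂ), (3⁻¹ : ℂ)} := by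
    rw [two_smul]
    rfl
  rw [h2]
  have hpred : ∃ n : ℕ, 0 < n ∧ (1 / (3 * (3⁻¹ : ℂ))) ^ n = 1 := ⟨1, one_pos, by norm_num⟩
  have hfil : Multiset.filter (fun r => ∃ n : ℕ, 0 < n ∧ (1 / (3 * r)) ^ n = 1)
      ({(3⁻¹ : ℂ), (3⁻¹ : ℂ)} : Multiset ℂ) = {(3⁻¹ : ℂ), (3⁻¹ : ℂ)} := by
    rw [Multiset.filter_eq_self]
    intro a ha
    rw [Multiset.insert_eq_cons, Multiset.mem_cons, Multiset.mem_singleton] at ha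
    rcases ha with h | h <;> (subst h; exact hpred)
  rw [hfil]
  rfl
end
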